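/- Let G be a connected simple undirected graph on vertex set {1,…,N} with N ≥ 2, let L be its Laplacian matrix, and let λ₂ = inf{ (vᵀLv)/(vᵀv) : v ∈ ℝ^N, v ≠ 0, 1ᵀv = 0 } be its second-smallest eigenvalue. Let β > 0, let x : [0,∞) → ℝ^N be differentiable with γ := sup_{τ ≥ 0} ‖(I − (1/N)·1·1ᵀ)·x'(τ)‖₂ < ∞, and let x̂ : [0,∞) → ℝ^N be differentiable with x̂'(t) = x'(t) − β·L·x̂(t) for all t ≥ 0 and x̂(0) = x(0). Then for every agent i, limsup_{t→∞} |x̂_i(t) − (1/N)·Σ_{j=1}^N x_j(t)| ≤ γ/(β·λ₂). -/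

import Mathlib

open Matrix Filter

lemma dac_quad_nonneg {N : ℕ} (G : SimpleGraph (Fin N)) [DecidableRel G.Adj] (v : Fin N → ℝ) :
    0 ≤ v ⬝ᵥ (G.lapMatrix ℝ *ᵥ v) := by
  have := (SimpleGraph.posSemidef_lapMatrix ℝ G).dotProduct_mulVec_nonneg v
  simpa using this

lemma dac_quad_pos {N : ℕ} (hN : 2 ≤ N) (G : SimpleGraph (Fin N)) [DecidableRel G.Adj]
    (hconn : G.Connected) (v : Fin N → ℝ) (hv : v ≠ 0) (hs : (∑ i, v i) = 0) :
    0 < v ⬝ᵥ (G.lapMatrix ℝ *ᵥ v) := by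
  rcases (dac_quad_nonneg G v).eq_or_lt with h | h
  · exfalso
    have hz : Matrix.toLinearMap₂' ℝ (G.lapMatrix ℝ) v v = 0 := by
      rw [Matrix.toLinearMap₂'_apply']; exact h.symm
    rw [SimpleGraph.lapMatrix_toLinearMap₂'_apply'_eq_zero_iff_forall_reachable] at hz
    have hN0 : (0 : ℕ) < N := by omega
    have i0 : Fin N := ⟨0, hN0⟩
    have hconst : ∀ j, v j = v i0 := fun j => hz j i0 (hconn.preconnected j i0)
    have : (∑ i, v i) = N * v i0 := by
      rw [Finset.sum_congr rfl (fun j _ => hconst j)]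
      simp [Finset.card_univ, mul_comm]
    rw [hs] at this
    have hNne : (N : ℝ) ≠ 0 := by positivity
    have hvi0 : v i0 = 0 := by
      have := this.symm
      rcases mul_eq_zero.1 this with h0 | h0
      · exact absurd h0 hNne
      · exact h0
    apply hv
    funext j
    rw [hconst j, hvi0]; rfl
  · exact h

lemma dac_lam2_key {N : ℕ} (hN : 2 ≤ N) (G : SimpleGraph (Fin N)) [DecidableRel G.Adj]
    (hconn : G.Connected) :
    ∃ m : ℝ, 0 < m ∧
      {r : ℝ | ∃ v : Fin N → ℝ, v ≠ 0 ∧ (∑ i, v i) = 0 ∧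
        r = (v ⬝ᵥ (G.lapMatrix ℝ *ᵥ v)) / (v ⬝ᵥ v)}.Nonempty ∧
      (∀ r ∈ {r : ℝ | ∃ v : Fin N → ℝ, v ≠ 0 ∧ (∑ i, v i) = 0 ∧
        r = (v ⬝ᵥ (G.lapMatrix ℝ *ᵥ v)) / (v ⬝ᵥ v)}, m ≤ r) := by
  classical
  set Q : (Fin N → ℝ) → ℝ := fun v => v ⬝ᵥ (G.lapMatrix ℝ *ᵥ v) with hQ
  set K : Set (Fin N → ℝ) := {v | (∑ i, v i) = 0 ∧ v ⬝ᵥ v = 1} with hK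
  -- K is nonempty
  have hN0 : (0:ℕ) < N := by omega
  have hN1 : (1:ℕ) < N := by omega
  set i0 : Fin N := ⟨0, hN0⟩
  set i1 : Fin N := ⟨1, hN1⟩
  have hne01 : i0 ≠ i1 := by simp [i0, i1, Fin.ext_iff]
  set s : ℝ := (Real.sqrt 2)⁻¹ with hs
  have hs2 : s * s = 2⁻¹ := by
    rw [hs, ← mul_inv]
    rw [Real.mul_self_sqrt (by norm_num)]
  set v1 : Fin N → ℝ := fun i => if i = i0 then s else if i = i1 then -s else 0 with hv1
  have hv1sum : (∑ i, v1 i) = 0 := by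
    have : ∀ i, v1 i = (if i = i0 then s else 0) + (if i = i1 then -s else 0) := by
      intro i
      rcases eq_or_ne i i0 with h | h
      · subst h; simp [hv1, hne01.symm, (by simpa using hne01 : ¬ i0 = i1)]
      · simp [hv1, h]
    simp_rw [this, Finset.sum_add_distrib, Finset.sum_ite_eq' Finset.univ,
      Finset.mem_univ, if_true]
    ring
  have hv1dot : v1 ⬝ᵥ v1 = 1 := by
    have : ∀ i, v1 i * v1 i = (if i = i0 then s*s else 0) + (if i = i1 then s*s else 0) := by
      intro i
      rcases eq_or_ne i i0 with h | h
      · subst h; simp [hv1, (by simpa using hne01 : ¬ i0 = i1)]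
      · rcases eq_or_ne i i1 with h' | h'
        · subst h'; simp [hv1, h]
        · simp [hv1, h, h']
    rw [dotProduct]
    simp_rw [this, Finset.sum_add_distrib, Finset.sum_ite_eq' Finset.univ,
      Finset.mem_univ, if_true, hs2]
    norm_num
  have hKne : K.Nonempty := ⟨v1, hv1sum, hv1dot⟩
  -- K is compact
  have hKclosed : IsClosed K := by
    have h1 : IsClosed {v : Fin N → ℝ | (∑ i, v i) = 0} :=
      isClosed_eq (by continuity) continuous_const
    have h2 : IsClosed {v : Fin N → ℝ | v ⬝ᵥ v = 1} := by
      refine isClosed_eq ?_ continuous_const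
      unfold dotProduct
      exact continuous_finset_sum _ fun i _ => (continuous_apply i).mul (continuous_apply i)
    exact h1.inter h2
  have hKsub : K ⊆ Metric.closedBall (0 : Fin N → ℝ) 1 := by
    intro v hv
    rw [Metric.mem_closedBall, dist_zero_right]
    rw [pi_norm_le_iff_of_nonneg (by norm_num)]
    intro i
    have h1 : v i * v i ≤ 1 := by
      rw [← hv.2]
      rw [dotProduct]
      refine Finset.single_le_sum (f := fun j => v j * v j) (fun j _ => mul_self_nonneg _)
        (Finset.mem_univ i)
    have : |v i| ≤ 1 := by nlinarith [abs_nonneg (v i), abs_mul_abs_self (v i)]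
    simpa using this
  have hKcomp : IsCompact K := (isCompact_closedBall 0 1).of_isClosed_subset hKclosed hKsub
  -- Q continuous
  have hQcont : Continuous Q := by
    unfold Q
    unfold dotProduct Matrix.mulVec dotProduct
    exact continuous_finset_sum _ fun i _ => (continuous_apply i).mul
      (continuous_finset_sum _ fun j _ => (continuous_const.mul (continuous_apply j)))
  obtain ⟨v0, hv0K, hmin⟩ := hKcomp.exists_isMinOn hKne hQcont.continuousOn
  have hv0ne : v0 ≠ 0 := by
    intro h
    have h2 := hv0K.2
    rw [h] at h2
    simp at h2
  have hm : 0 < Q v0 := dac_quad_pos hN G hconn v0 hv0ne hv0K.1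
  refine ⟨Q v0, hm, ⟨Q v0, v0, hv0ne, hv0K.1, by rw [hv0K.2, div_one]⟩, ?_⟩
  rintro r ⟨v, hvne, hvsum, rfl⟩
  have hn2 : 0 < v ⬝ᵥ v := by
    rw [dotProduct]
    obtain ⟨i, hi⟩ := Function.ne_iff.1 hvne
    refine Finset.sum_pos' (fun j _ => mul_self_nonneg _) ⟨i, Finset.mem_univ i, ?_⟩
    exact mul_self_pos.2 (by simpa using hi)
  set c : ℝ := (Real.sqrt (v ⬝ᵥ v))⁻¹ with hc
  have hsq : Real.sqrt (v ⬝ᵥ v) * Real.sqrt (v ⬝ᵥ v) = v ⬝ᵥ v := Real.mul_self_sqrt hn2.le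
  have hc2 : c * c = (v ⬝ᵥ v)⁻¹ := by rw [hc, ← mul_inv, hsq]
  have huK : c • v ∈ K := by
    constructor
    · show (∑ i, c * v i) = 0
      rw [← Finset.mul_sum, hvsum, mul_zero]
    · show (c • v) ⬝ᵥ (c • v) = 1
      rw [smul_dotProduct, dotProduct_smul, smul_eq_mul, smul_eq_mul, ← mul_assoc,
        hc2, inv_mul_cancel₀ hn2.ne']
  have hQu : Q (c • v) = (v ⬝ᵥ v)⁻¹ * Q v := by
    show (c • v) ⬝ᵥ (SimpleGraph.lapMatrix ℝ G *ᵥ (c • v))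
        = (v ⬝ᵥ v)⁻¹ * (v ⬝ᵥ (SimpleGraph.lapMatrix ℝ G *ᵥ v))
    rw [Matrix.mulVec_smul, smul_dotProduct, dotProduct_smul, smul_eq_mul,
      smul_eq_mul, ← mul_assoc, hc2]
  have h2 : Q v0 ≤ Q (c • v) := hmin huK
  show Q v0 ≤ Q v / (v ⬝ᵥ v)
  rw [hQu] at h2
  calc Q v0 ≤ (v ⬝ᵥ v)⁻¹ * Q v := h2
    _ = Q v / (v ⬝ᵥ v) := by rw [div_eq_inv_mul]

/-- Lemma 1: ultimate bound of the conventional DAC algorithm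
`xhat' = x' − β·L·xhat` with exact initialization `xhat(0) = x(0)` over a connected
graph: every local estimate converges to the `γ/(β·λ₂)`-neighborhood of the average. -/
theorem conventional_dac_ultimate_bound
    (N : ℕ) (hN : 2 ≤ N) (G : SimpleGraph (Fin N)) [DecidableRel G.Adj]
    (hconn : G.Connected)
    (L : Matrix (Fin N) (Fin N) ℝ) (hL : L = G.lapMatrix ℝ)
    (lam2 : ℝ)
    (hlam2 : lam2 = sInf {r : ℝ | ∃ v : Fin N → ℝ, v ≠ 0 ∧ (∑ i, v i) = 0 ∧
        r = (v ⬝ᵥ (L *ᵥ v)) / (v ⬝ᵥ v)})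
    (β : ℝ) (hβ : 0 < β)
    (x : ℝ → Fin N → ℝ) (hx : Differentiable ℝ x)
    (γ : ℝ)
    (hγ : IsLUB {r : ℝ | ∃ τ ≥ (0 : ℝ), r = Real.sqrt (∑ i,
        ((((1 : Matrix (Fin N) (Fin N) ℝ)
            - (N : ℝ)⁻¹ • Matrix.of (fun _ _ => (1 : ℝ))) *ᵥ deriv x τ) i) ^ 2)} γ)
    (xhat : ℝ → Fin N → ℝ)
    (hinit : xhat 0 = x 0)
    (hode : ∀ t ≥ (0 : ℝ), HasDerivAt xhat (deriv x t - β • (L *ᵥ xhat t)) t) :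
    ∀ i : Fin N,
      limsup (fun t : ℝ => |xhat t i - (∑ j, x t j) / N|) atTop ≤ γ / (β * lam2) := by
  classical
  subst hL
  set L := G.lapMatrix ℝ with hLdef
  have hNR : (0:ℝ) < N := by positivity
  -- spectral facts
  obtain ⟨m, hm, hSne, hSlb⟩ := dac_lam2_key hN G hconn
  have hlam2pos : 0 < lam2 := by
    rw [hlam2]; exact lt_of_lt_of_le hm (le_csInf hSne hSlb)
  have hRayleigh : ∀ v : Fin N → ℝ, (∑ i, v i) = 0 →
      lam2 * (v ⬝ᵥ v) ≤ v ⬝ᵥ (L *ᵥ v) := by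
    intro v hv
    rcases eq_or_ne v 0 with rfl | hvne
    · simp
    · have hn2 : 0 < v ⬝ᵥ v := by
        rw [dotProduct]
        obtain ⟨i, hi⟩ := Function.ne_iff.1 hvne
        refine Finset.sum_pos' (fun j _ => mul_self_nonneg _) ⟨i, Finset.mem_univ i, ?_⟩
        exact mul_self_pos.2 (by simpa using hi)
      have hmem : (v ⬝ᵥ (L *ᵥ v)) / (v ⬝ᵥ v) ∈
          {r : ℝ | ∃ v : Fin N → ℝ, v ≠ 0 ∧ (∑ i, v i) = 0 ∧
            r = (v ⬝ᵥ (L *ᵥ v)) / (v ⬝ᵥ v)} := ⟨v, hvne, hv, rfl⟩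
      have hle : lam2 ≤ (v ⬝ᵥ (L *ᵥ v)) / (v ⬝ᵥ v) := by
        rw [hlam2]; exact csInf_le ⟨m, hSlb⟩ hmem
      calc lam2 * (v ⬝ᵥ v) ≤ ((v ⬝ᵥ (L *ᵥ v)) / (v ⬝ᵥ v)) * (v ⬝ᵥ v) := by
            exact mul_le_mul_of_nonneg_right hle hn2.le
        _ = v ⬝ᵥ (L *ᵥ v) := by field_simp
  -- gamma facts
  set w : ℝ → Fin N → ℝ := fun t => (((1 : Matrix (Fin N) (Fin N) ℝ)
      - (N : ℝ)⁻¹ • Matrix.of (fun _ _ => (1 : ℝ))) *ᵥ deriv x t) with hwdef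
  have hγ0 : 0 ≤ γ :=
    le_trans (Real.sqrt_nonneg _) (hγ.1 ⟨0, le_refl 0, rfl⟩)
  have hwbound : ∀ t, 0 ≤ t → (∑ i, (w t i)^2) ≤ γ^2 := by
    intro t ht
    have h1 : Real.sqrt (∑ i, (w t i)^2) ≤ γ := hγ.1 ⟨t, ht, rfl⟩
    have h2 : (0:ℝ) ≤ ∑ i, (w t i)^2 := Finset.sum_nonneg fun i _ => sq_nonneg _
    calc (∑ i, (w t i)^2) = (Real.sqrt (∑ i, (w t i)^2))^2 := (Real.sq_sqrt h2).symm
      _ ≤ γ^2 := pow_le_pow_left₀ (Real.sqrt_nonneg _) h1 2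
  have hwapply : ∀ t, ∀ i, w t i = deriv x t i - (∑ j, deriv x t j) / N := by
    intro t i
    rw [hwdef]
    simp only [Matrix.sub_mulVec, Matrix.one_mulVec, Pi.sub_apply]
    congr 1
    rw [Matrix.smul_mulVec]
    simp only [Pi.smul_apply, smul_eq_mul]
    rw [Matrix.mulVec, dotProduct]
    simp only [Matrix.of_apply, one_mul]
    rw [div_eq_inv_mul]

  -- derivatives of x componentwise
  have hxi : ∀ (t : ℝ) (i : Fin N), HasDerivAt (fun τ => x τ i) (deriv x t i) t :=
    fun t i => hasDerivAt_pi.1 (hx t).hasDerivAt i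
  have hsumx : ∀ t : ℝ, HasDerivAt (fun τ => ∑ j, x τ j) (∑ j, deriv x t j) t :=
    fun t => HasDerivAt.fun_sum fun j _ => hxi t j
  -- column sums of L vanish
  have hrow : ∀ j, (∑ k, L j k) = 0 := by
    intro j
    have h1 := congr_fun (SimpleGraph.lapMatrix_mulVec_const_eq_zero (R := ℝ) (G := G)) j
    simpa [Matrix.mulVec, dotProduct] using h1
  have hcolsum : ∀ u : Fin N → ℝ, (∑ j, (L *ᵥ u) j) = 0 := by
    intro u
    have hsymm : L.IsSymm := SimpleGraph.isSymm_lapMatrix (R := ℝ) (G := G)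
    calc (∑ j, (L *ᵥ u) j) = ∑ j, ∑ k, L j k * u k := by
          simp [Matrix.mulVec, dotProduct]
      _ = ∑ k, ∑ j, L j k * u k := Finset.sum_comm
      _ = ∑ k, (∑ j, L k j) * u k := by
          refine Finset.sum_congr rfl fun k _ => ?_
          rw [Finset.sum_mul]
          refine Finset.sum_congr rfl fun j _ => ?_
          rw [hsymm.apply k j]
      _ = 0 := by simp [hrow]
  -- conservation of the sum
  have hSder : ∀ τ : ℝ, 0 ≤ τ →
      HasDerivAt (fun σ => (∑ j, xhat σ j) - ∑ j, x σ j) 0 τ := by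
    intro τ hτ
    have h1 : HasDerivAt (fun σ => ∑ j, xhat σ j)
        (∑ j, (deriv x τ - β • (L *ᵥ xhat τ)) j) τ :=
      HasDerivAt.fun_sum fun j _ => hasDerivAt_pi.1 (hode τ hτ) j
    have h2 := h1.sub (hsumx τ)
    have h3 : (∑ j, (deriv x τ - β • (L *ᵥ xhat τ)) j) - (∑ j, deriv x τ j) = 0 := by
      simp only [Pi.sub_apply, Pi.smul_apply, smul_eq_mul, Finset.sum_sub_distrib]
      rw [← Finset.mul_sum, hcolsum (xhat τ)]
      ring
    rw [h3] at h2
    exact h2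
  have hS : ∀ t : ℝ, 0 ≤ t → (∑ j, xhat t j) = ∑ j, x t j := by
    intro t ht
    have hcont : ContinuousOn (fun σ => (∑ j, xhat σ j) - ∑ j, x σ j) (Set.Icc 0 t) :=
      fun τ hτ => ((hSder τ hτ.1).continuousAt).continuousWithinAt
    have hder : ∀ τ ∈ Set.Ico (0:ℝ) t,
        HasDerivWithinAt (fun σ => (∑ j, xhat σ j) - ∑ j, x σ j) 0 (Set.Ici τ) τ :=
      fun τ hτ => (hSder τ hτ.1).hasDerivWithinAt
    have h0 : (∑ j, xhat 0 j) - (∑ j, x 0 j) = 0 := by rw [hinit]; ring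
    have := constant_of_has_deriv_right_zero hcont hder t (Set.mem_Icc.2 ⟨ht, le_refl t⟩)
    rw [h0] at this
    linarith [this]
  -- the error function
  set er : ℝ → Fin N → ℝ := fun t i => xhat t i - (∑ j, x t j) / N with herdef
  have hersum : ∀ t : ℝ, 0 ≤ t → (∑ i, er t i) = 0 := by
    intro t ht
    have : (∑ i : Fin N, er t i) = (∑ i, xhat t i) - (N : ℝ) * ((∑ j, x t j) / N) := by
      rw [herdef]
      simp [Finset.sum_sub_distrib, Finset.card_univ, mul_comm]
    rw [this, hS t ht]
    field_simp
    ring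
  have hLer : ∀ t : ℝ, L *ᵥ er t = L *ᵥ xhat t := by
    intro t
    have h1 : er t = xhat t - ((∑ j, x t j)/N) • (fun _ => (1:ℝ)) := by
      funext i; simp [herdef]
    rw [h1, Matrix.mulVec_sub, Matrix.mulVec_smul,
      SimpleGraph.lapMatrix_mulVec_const_eq_zero, smul_zero, sub_zero]
  have herder : ∀ t : ℝ, 0 ≤ t → ∀ i : Fin N,
      HasDerivAt (fun τ => er τ i) (w t i - β * (L *ᵥ er t) i) t := by
    intro t ht i
    have h1 : HasDerivAt (fun τ => xhat τ i) ((deriv x t - β • (L *ᵥ xhat t)) i) t :=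
      hasDerivAt_pi.1 (hode t ht) i
    have h2 := h1.sub ((hsumx t).div_const N)
    refine h2.congr_deriv ?_
    rw [hwapply, hLer]
    simp only [Pi.sub_apply, Pi.smul_apply, smul_eq_mul]
    ring
  -- the Lyapunov function
  set V : ℝ → ℝ := fun t => ∑ i, (er t i)^2 with hVdef
  have hV0 : ∀ t, 0 ≤ V t := fun t => Finset.sum_nonneg fun i _ => sq_nonneg _
  set D : ℝ → ℝ := fun t => ∑ i, 2 * er t i * (w t i - β * (L *ᵥ er t) i) with hDdef
  have hVder : ∀ t : ℝ, 0 ≤ t → HasDerivAt V (D t) t := by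
    intro t ht
    refine HasDerivAt.fun_sum fun i _ => ?_
    have h1 := (herder t ht i).pow 2
    refine h1.congr_deriv ?_
    simp
  have hVd : ∀ t, er t ⬝ᵥ er t = V t := by
    intro t
    rw [dotProduct, hVdef]
    exact Finset.sum_congr rfl fun i _ => (pow_two _).symm
  have hVbound : ∀ t : ℝ, 0 ≤ t →
      D t ≤ 2*γ*Real.sqrt (V t) - 2*(β*lam2)*V t := by
    intro t ht
    have hsplit : D t = 2*(er t ⬝ᵥ w t) - 2*β*(er t ⬝ᵥ (L *ᵥ er t)) := by
      rw [hDdef, dotProduct, dotProduct, Finset.mul_sum, Finset.mul_sum,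
        ← Finset.sum_sub_distrib]
      exact Finset.sum_congr rfl fun i _ => by ring
    have hcs : er t ⬝ᵥ w t ≤ γ * Real.sqrt (V t) := by
      have h1 : (∑ i, er t i * w t i)^2 ≤ (∑ i, (er t i)^2) * (∑ i, (w t i)^2) :=
        Finset.sum_mul_sq_le_sq_mul_sq Finset.univ _ _
      have h2 : (∑ i, (er t i)^2) * (∑ i, (w t i)^2) ≤ V t * γ^2 :=
        mul_le_mul_of_nonneg_left (hwbound t ht) (hV0 t)
      have h3 := Real.sqrt_le_sqrt (le_trans h1 h2)
      rw [Real.sqrt_sq_eq_abs] at h3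
      have h4 : er t ⬝ᵥ w t ≤ Real.sqrt (V t * γ^2) :=
        le_trans (le_abs_self _) h3
      rw [Real.sqrt_mul (hV0 t), Real.sqrt_sq hγ0] at h4
      linarith [h4]
    have hray := hRayleigh (er t) (hersum t ht)
    rw [hVd t] at hray
    have h5 : 2*β*(lam2 * V t) ≤ 2*β*(er t ⬝ᵥ (L *ᵥ er t)) :=
      mul_le_mul_of_nonneg_left hray (by positivity)
    rw [hsplit]
    nlinarith [h5, hcs]
  -- exponential weighting
  set a : ℝ := β * lam2 with hadef
  have ha : 0 < a := mul_pos hβ hlam2pos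
  set U : ℝ → ℝ := fun t => Real.exp (2*a*t) * V t with hUdef
  have hU0 : ∀ t, 0 ≤ U t := fun t => mul_nonneg (Real.exp_pos _).le (hV0 t)
  have hUder : ∀ t : ℝ, 0 ≤ t →
      HasDerivAt U (2*a*Real.exp (2*a*t) * V t + Real.exp (2*a*t) * D t) t := by
    intro t ht
    have h1 : HasDerivAt (fun τ : ℝ => 2*a*τ) (2*a) t := by
      simpa using (hasDerivAt_id t).const_mul (2*a)
    have hexp := h1.exp
    have h2 := hexp.mul (hVder t ht)
    refine h2.congr_deriv ?_
    ring
  have hsqrtU : ∀ t : ℝ, Real.exp (a*t) * Real.sqrt (V t) = Real.sqrt (U t) := by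
    intro t
    have h1 : U t = (Real.exp (a*t) * Real.exp (a*t)) * V t := by
      rw [hUdef, ← Real.exp_add]
      ring_nf
    rw [h1, Real.sqrt_mul (mul_self_nonneg _), Real.sqrt_mul_self (Real.exp_pos _).le]
  have hUbound : ∀ t : ℝ, 0 ≤ t →
      2*a*Real.exp (2*a*t) * V t + Real.exp (2*a*t) * D t
        ≤ 2*γ*Real.exp (a*t) * Real.sqrt (U t + 1) := by
    intro t ht
    have e2pos : (0:ℝ) < Real.exp (2*a*t) := Real.exp_pos _
    have h1 := mul_le_mul_of_nonneg_left (hVbound t ht) e2pos.le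
    have h2 : 2*a*Real.exp (2*a*t) * V t + Real.exp (2*a*t) * D t
        ≤ 2*γ*Real.exp (a*t) * Real.sqrt (U t) := by
      have h3 : Real.exp (2*a*t) = Real.exp (a*t) * Real.exp (a*t) := by
        rw [← Real.exp_add]; ring_nf
      have h4 : Real.exp (a*t) * (Real.exp (a*t) * Real.sqrt (V t))
          = Real.exp (a*t) * Real.sqrt (U t) := by rw [hsqrtU]
      calc 2*a*Real.exp (2*a*t) * V t + Real.exp (2*a*t) * D t
          ≤ 2*a*Real.exp (2*a*t) * V t
            + Real.exp (2*a*t) * (2*γ*Real.sqrt (V t) - 2*a*V t) := by linarith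
        _ = 2*γ*(Real.exp (a*t) * (Real.exp (a*t) * Real.sqrt (V t))) := by rw [h3]; ring
        _ = 2*γ*(Real.exp (a*t) * Real.sqrt (U t)) := by rw [h4]
        _ = 2*γ*Real.exp (a*t) * Real.sqrt (U t) := by ring
    have h5 : Real.sqrt (U t) ≤ Real.sqrt (U t + 1) := Real.sqrt_le_sqrt (by linarith)
    have h6 : (0:ℝ) ≤ 2*γ*Real.exp (a*t) := by positivity
    nlinarith [h2, h5, h6]
  -- the comparison functions
  set φ : ℝ → ℝ := fun t => Real.sqrt (U t + 1) with hφdef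
  set ψ : ℝ → ℝ := fun t => (γ/a) * Real.exp (a*t) with hψdef
  have hφpos : ∀ t, 0 < φ t := fun t => Real.sqrt_pos.2 (by linarith [hU0 t])
  have hφder : ∀ t : ℝ, 0 ≤ t → HasDerivAt φ
      ((2*a*Real.exp (2*a*t) * V t + Real.exp (2*a*t) * D t) / (2 * Real.sqrt (U t + 1))) t := by
    intro t ht
    exact ((hUder t ht).add_const 1).sqrt (by nlinarith [hU0 t])
  have hφbound : ∀ t : ℝ, 0 ≤ t →
      (2*a*Real.exp (2*a*t) * V t + Real.exp (2*a*t) * D t) / (2 * Real.sqrt (U t + 1))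
        ≤ γ * Real.exp (a*t) := by
    intro t ht
    rw [div_le_iff₀ (by positivity : (0:ℝ) < 2 * Real.sqrt (U t + 1))]
    have := hUbound t ht
    nlinarith [this]
  have hψder : ∀ t : ℝ, HasDerivAt ψ (γ * Real.exp (a*t)) t := by
    intro t
    have h1 : HasDerivAt (fun τ : ℝ => a*τ) a t := by
      simpa using (hasDerivAt_id t).const_mul a
    have h2 := (h1.exp).const_mul (γ/a)
    refine h2.congr_deriv ?_
    field_simp
  have hFder : ∀ t : ℝ, 0 ≤ t → HasDerivAt (fun τ => ψ τ - φ τ)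
      (γ * Real.exp (a*t)
        - (2*a*Real.exp (2*a*t) * V t + Real.exp (2*a*t) * D t) / (2 * Real.sqrt (U t + 1))) t :=
    fun t ht => (hψder t).sub (hφder t ht)
  have hFmono : MonotoneOn (fun τ => ψ τ - φ τ) (Set.Ici (0:ℝ)) := by
    apply monotoneOn_of_deriv_nonneg (convex_Ici 0)
    · exact fun t ht => ((hFder t ht).continuousAt).continuousWithinAt
    · rw [interior_Ici]
      exact fun t ht => (hFder t (le_of_lt ht)).differentiableAt.differentiableWithinAt
    · rw [interior_Ici]
      intro t ht
      rw [(hFder t ht.le).deriv]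
      have := hφbound t ht.le
      linarith
  have hφle : ∀ t : ℝ, 0 ≤ t → φ t ≤ φ 0 + (γ/a) * Real.exp (a*t) := by
    intro t ht
    have h1 := hFmono (Set.mem_Ici.2 le_rfl) (Set.mem_Ici.2 ht) ht
    have h2 : ψ 0 = γ/a := by simp [hψdef]
    have h3 : (0:ℝ) ≤ γ/a := div_nonneg hγ0 ha.le
    simp only at h1
    rw [h2] at h1
    have : ψ t = (γ/a) * Real.exp (a*t) := rfl
    linarith [h1]
  -- the pointwise ultimate bound
  intro i
  have hkey : ∀ t : ℝ, 0 ≤ t →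
      |xhat t i - (∑ j, x t j)/N| ≤ φ 0 * Real.exp (-(a*t)) + γ/a := by
    intro t ht
    have h1 : |er t i| ≤ Real.sqrt (V t) := by
      have h2 : (er t i)^2 ≤ V t :=
        Finset.single_le_sum (f := fun j => (er t j)^2) (fun j _ => sq_nonneg _)
          (Finset.mem_univ i)
      calc |er t i| = Real.sqrt ((er t i)^2) := (Real.sqrt_sq_eq_abs _).symm
        _ ≤ Real.sqrt (V t) := Real.sqrt_le_sqrt h2
    have hepos : (0:ℝ) < Real.exp (a*t) := Real.exp_pos _
    have h4 := hsqrtU t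
    have h5 : Real.sqrt (U t) ≤ φ t := Real.sqrt_le_sqrt (by linarith)
    have h6 := hφle t ht
    have h3 : Real.sqrt (V t) ≤ φ 0 * Real.exp (-(a*t)) + γ/a := by
      rw [Real.exp_neg]
      rw [show Real.sqrt (V t) = Real.sqrt (U t) / Real.exp (a*t) by
        rw [← h4]; field_simp]
      rw [div_le_iff₀ hepos]
      have h7 : (φ 0 * (Real.exp (a*t))⁻¹ + γ/a) * Real.exp (a*t)
          = φ 0 + (γ/a) * Real.exp (a*t) := by
        field_simp
      rw [h7]
      linarith
    exact le_trans h1 h3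
  -- the limsup bound
  have hco : IsCoboundedUnder (· ≤ ·) atTop (fun t : ℝ => |xhat t i - (∑ j, x t j)/N|) :=
    isCoboundedUnder_le_of_le atTop (fun t => abs_nonneg _)
  refine le_of_forall_pos_le_add fun ε hε => ?_
  apply limsup_le_of_le hco
  have htend : Tendsto (fun t : ℝ => φ 0 * Real.exp (-(a*t))) atTop (nhds 0) := by
    have h1 : Tendsto (fun t : ℝ => a*t) atTop atTop := by
      exact Tendsto.const_mul_atTop ha tendsto_id
    have h2 : Tendsto (fun t : ℝ => -(a*t)) atTop atBot :=
      tendsto_neg_atTop_atBot.comp h1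
    have h3 := Real.tendsto_exp_atBot.comp h2
    have h4 := h3.const_mul (φ 0)
    simpa using h4
  have hev := htend.eventually_lt_const hε
  filter_upwards [hev, eventually_ge_atTop (0:ℝ)] with t h1 h2
  have h3 := hkey t h2
  have : γ/a = γ/(β*lam2) := rfl
  linarith [h3, h1]
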